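/- arXiv:1409.1777 — 3 statements merged into one kernel-verified Lean document; each statement's English description precedes it below -/
import Mathlib

section
/- For every fixed $n \in \mathbb{N}$, the logarithmic integral satisfies $\mathrm{li}(x) = \sum_{j=1}^{n} \frac{(j-1)!\, x}{\log^j x} + O\left( \frac{x}{\log^{n+1} x} \right)$ as $x \to \infty$. -/
open Filter Real MeasureTheory intervalIntegral Set Topology

/-- The logarithmic integral `li x = ∫ 0^x dt / log t`, understood as the Cauchy
principal value `lim_{ε → 0⁺} (∫_0^{1-ε} dt/log t + ∫_{1+ε}^x dt/log t)`. -/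
noncomputable def li (x : ℝ) : ℝ :=
  limUnder (nhdsWithin (0 : ℝ) (Set.Ioi 0)) fun ε : ℝ =>
    (∫ t in (0 : ℝ)..(1 - ε), 1 / Real.log t) + ∫ t in (1 + ε)..x, 1 / Real.log t

/-- The regularized integrand `1/log t - 1/(t-1)`. -/
noncomputable def PVh (t : ℝ) : ℝ := 1 / Real.log t - 1 / (t - 1)

lemma log_ge_aux {t : ℝ} (ht : 0 < t) : (t - 1) / t ≤ Real.log t := by
  have h := Real.log_le_sub_one_of_pos (x := 1 / t) (by positivity)
  rw [Real.log_div one_ne_zero (ne_of_gt ht), Real.log_one] at h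
  have : -(Real.log t) ≤ 1 / t - 1 := by linarith
  have h2 : (t - 1) / t = -(1 / t - 1) := by field_simp; ring
  linarith [this, h2.ge]

lemma PVh_abs_le {t : ℝ} (ht0 : 0 ≤ t) (ht2 : t ≤ 2) : |PVh t| ≤ 1 := by
  rcases eq_or_lt_of_le ht0 with h0 | h0
  · simp [PVh, ← h0, Real.log_zero]
  rcases lt_trichotomy t 1 with h1 | h1 | h1
  · -- 0 < t < 1
    have hlog_neg : Real.log t < 0 := Real.log_neg h0 h1
    have hub : Real.log t ≤ t - 1 := Real.log_le_sub_one_of_pos h0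
    have hlb : (t - 1) / t ≤ Real.log t := log_ge_aux h0
    have ht1 : t - 1 < 0 := by linarith
    have hc : (t - 1) / t < 0 := div_neg_of_neg_of_pos ht1 h0
    have h1' : 1 / (t - 1) ≤ 1 / Real.log t :=
      one_div_le_one_div_of_neg_of_le ht1 hub
    have h2' : 1 / Real.log t ≤ 1 / ((t - 1) / t) :=
      one_div_le_one_div_of_neg_of_le hlog_neg hlb
    have h3 : (1 : ℝ) / ((t - 1) / t) = t / (t - 1) := by
      rw [one_div_div]
    have h4 : t / (t - 1) - 1 / (t - 1) = 1 := by
      rw [div_sub_div_same, div_self (ne_of_lt ht1)]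
    rw [abs_le]
    constructor <;> simp only [PVh] <;> nlinarith [h1', h2', h3, h4]
  · subst h1; simp [PVh, Real.log_one]
  · -- 1 < t
    have hlog_pos : 0 < Real.log t := Real.log_pos h1
    have hub : Real.log t ≤ t - 1 := Real.log_le_sub_one_of_pos h0
    have hlb : (t - 1) / t ≤ Real.log t := log_ge_aux h0
    have ht1 : 0 < t - 1 := by linarith
    have hc : 0 < (t - 1) / t := div_pos ht1 h0
    have h1' : 1 / (t - 1) ≤ 1 / Real.log t :=
      one_div_le_one_div_of_le hlog_pos hub
    have h2' : 1 / Real.log t ≤ 1 / ((t - 1) / t) :=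
      one_div_le_one_div_of_le hc hlb
    have h3 : (1 : ℝ) / ((t - 1) / t) = t / (t - 1) := one_div_div _ _
    have h4 : t / (t - 1) - 1 / (t - 1) = 1 := by
      rw [div_sub_div_same, div_self (ne_of_gt ht1)]
    rw [abs_le]
    constructor <;> simp only [PVh] <;> nlinarith [h1', h2', h3, h4]

lemma PVh_integrableOn : IntegrableOn PVh (Icc (0:ℝ) 2) := by
  apply Measure.integrableOn_of_bounded (M := 1) (by simp)
  · exact ((measurable_const.div Real.measurable_log).sub
      (measurable_const.div (measurable_id.sub measurable_const))).aestronglyMeasurable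
  · refine (ae_restrict_iff' measurableSet_Icc).2 (Eventually.of_forall fun t ht => ?_)
    rw [Real.norm_eq_abs]
    exact PVh_abs_le ht.1 ht.2

lemma invlog_eq : (fun t : ℝ => 1 / Real.log t) = fun t => PVh t + 1 / (t - 1) := by
  funext t; simp [PVh]

lemma PVh_ii {a b : ℝ} (ha : a ∈ Icc (0:ℝ) 2) (hb : b ∈ Icc (0:ℝ) 2) :
    IntervalIntegrable PVh volume a b := by
  apply IntegrableOn.intervalIntegrable
  exact PVh_integrableOn.mono_set (uIcc_subset_Icc ha hb)

lemma invlog_intIntegrable {a b : ℝ} (ha : 1 < a) (hb : 1 < b) :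
    IntervalIntegrable (fun t => 1 / Real.log t) volume a b := by
  apply ContinuousOn.intervalIntegrable
  intro t ht
  have h1t : 1 < t := lt_of_lt_of_le (lt_min ha hb) ht.1
  have hlog : Real.log t ≠ 0 := ne_of_gt (Real.log_pos h1t)
  exact (continuousAt_const.div
    (Real.continuousAt_log (by linarith)) hlog).continuousWithinAt

lemma invsub_intIntegrable_left {ε : ℝ} (hε : 0 < ε) (hε1 : ε < 1) :
    IntervalIntegrable (fun t : ℝ => 1 / (t - 1)) volume 0 (1 - ε) := by
  apply ContinuousOn.intervalIntegrable
  intro t ht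
  rw [uIcc_of_le (by linarith)] at ht
  have : t - 1 ≠ 0 := by have := ht.2; intro h; nlinarith
  exact (continuousAt_const.div (continuousAt_id.sub continuousAt_const)
    this).continuousWithinAt

lemma invsub_intIntegrable_right {ε : ℝ} (hε : 0 < ε) (hε1 : ε < 1) :
    IntervalIntegrable (fun t : ℝ => 1 / (t - 1)) volume (1 + ε) 2 := by
  apply ContinuousOn.intervalIntegrable
  intro t ht
  rw [uIcc_of_le (by linarith)] at ht
  have : t - 1 ≠ 0 := by have := ht.1; intro h; nlinarith
  exact (continuousAt_const.div (continuousAt_id.sub continuousAt_const)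
    this).continuousWithinAt

lemma integral_invsub_left {ε : ℝ} (hε : 0 < ε) (hε1 : ε < 1) :
    ∫ t in (0:ℝ)..(1 - ε), 1 / (t - 1) = Real.log ε := by
  have hderiv : ∀ t ∈ uIcc (0:ℝ) (1 - ε),
      HasDerivAt (fun u => Real.log (1 - u)) (1 / (t - 1)) t := by
    intro t ht
    rw [uIcc_of_le (by linarith)] at ht
    have h1t : 0 < 1 - t := by have := ht.2; linarith
    have := (Real.hasDerivAt_log (ne_of_gt h1t)).comp t
      ((hasDerivAt_const t (1:ℝ)).sub (hasDerivAt_id t))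
    exact this.congr_deriv (by rw [show (t:ℝ) - 1 = -(1 - t) by ring, one_div, inv_neg]; ring)
  rw [integral_eq_sub_of_hasDerivAt hderiv (invsub_intIntegrable_left hε hε1)]
  simp

lemma integral_invsub_right {ε : ℝ} (hε : 0 < ε) (hε1 : ε < 1) :
    ∫ t in (1 + ε)..2, 1 / (t - 1) = -Real.log ε := by
  have hderiv : ∀ t ∈ uIcc (1 + ε) (2:ℝ),
      HasDerivAt (fun u => Real.log (u - 1)) (1 / (t - 1)) t := by
    intro t ht
    rw [uIcc_of_le (by linarith)] at ht
    have h1t : 0 < t - 1 := by have := ht.1; linarith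
    have := (Real.hasDerivAt_log (ne_of_gt h1t)).comp t
      ((hasDerivAt_id t).sub (hasDerivAt_const t (1:ℝ)))
    exact this.congr_deriv (by ring)
  rw [integral_eq_sub_of_hasDerivAt hderiv (invsub_intIntegrable_right hε hε1)]
  norm_num

noncomputable def liConst : ℝ := ∫ t in (0:ℝ)..2, PVh t

lemma tendsto_pv (x : ℝ) (hx : 2 ≤ x) :
    Tendsto (fun ε : ℝ => (∫ t in (0:ℝ)..(1 - ε), 1 / Real.log t)
        + ∫ t in (1 + ε)..x, 1 / Real.log t)
      (nhdsWithin 0 (Set.Ioi 0))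
      (𝓝 (liConst + ∫ t in (2:ℝ)..x, 1 / Real.log t)) := by
  set Φ : ℝ → ℝ := fun y => ∫ t in (0:ℝ)..y, PVh t with hΦdef
  have hΦcont : ContinuousOn Φ (Icc (0:ℝ) 2) := by
    have := continuousOn_primitive_interval (a := (0:ℝ)) (b := 2) (μ := volume)
      (f := PVh) (by rw [uIcc_of_le (by norm_num)]; exact PVh_integrableOn)
    rwa [uIcc_of_le (by norm_num)] at this
  have hmem : Ioo (0:ℝ) 1 ∈ nhdsWithin (0:ℝ) (Set.Ioi 0) :=
    Ioo_mem_nhdsGT_of_mem (by norm_num : (0:ℝ) ∈ Ico (0:ℝ) 1)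
  have heq : ∀ ε ∈ Ioo (0:ℝ) 1,
      Φ (1 - ε) + (Φ 2 - Φ (1 + ε)) + (∫ t in (2:ℝ)..x, 1 / Real.log t)
        = (∫ t in (0:ℝ)..(1 - ε), 1 / Real.log t) + ∫ t in (1 + ε)..x, 1 / Real.log t := by
    intro ε hε
    obtain ⟨hε0, hε1⟩ := hε
    have e1 : (∫ t in (0:ℝ)..(1 - ε), 1 / Real.log t) = Φ (1 - ε) + Real.log ε := by
      rw [invlog_eq, integral_add (PVh_ii (by norm_num) (by constructor <;> linarith))
        (invsub_intIntegrable_left hε0 hε1), integral_invsub_left hε0 hε1]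
    have hPVsplit : Φ (1 + ε) + (∫ t in (1 + ε)..2, PVh t) = Φ 2 :=
      integral_add_adjacent_intervals
        (PVh_ii (by norm_num) (by constructor <;> linarith))
        (PVh_ii (by constructor <;> linarith) (by norm_num))
    have e2 : (∫ t in (1 + ε)..2, 1 / Real.log t)
        = (Φ 2 - Φ (1 + ε)) - Real.log ε := by
      rw [invlog_eq, integral_add (PVh_ii (by constructor <;> linarith) (by norm_num))
        (invsub_intIntegrable_right hε0 hε1), integral_invsub_right hε0 hε1]
      linarith [hPVsplit]
    have e3 : (∫ t in (1 + ε)..x, 1 / Real.log t)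
        = (∫ t in (1 + ε)..2, 1 / Real.log t) + ∫ t in (2:ℝ)..x, 1 / Real.log t :=
      (integral_add_adjacent_intervals (invlog_intIntegrable (by linarith) (by norm_num))
        (invlog_intIntegrable (by norm_num) (by linarith))).symm
    rw [e1, e3, e2]; ring
  have h1m : Tendsto (fun ε : ℝ => 1 - ε) (nhdsWithin 0 (Set.Ioi 0))
      (nhdsWithin 1 (Icc (0:ℝ) 2)) := by
    rw [tendsto_nhdsWithin_iff]
    constructor
    · have : Tendsto (fun ε : ℝ => 1 - ε) (𝓝 0) (𝓝 (1 - 0)) :=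
        (continuous_const.sub continuous_id).tendsto 0
      simpa using this.mono_left nhdsWithin_le_nhds
    · filter_upwards [hmem] with ε hε
      exact ⟨by linarith [hε.2], by linarith [hε.1]⟩
  have h1p : Tendsto (fun ε : ℝ => 1 + ε) (nhdsWithin 0 (Set.Ioi 0))
      (nhdsWithin 1 (Icc (0:ℝ) 2)) := by
    rw [tendsto_nhdsWithin_iff]
    constructor
    · have : Tendsto (fun ε : ℝ => 1 + ε) (𝓝 0) (𝓝 (1 + 0)) :=
        (continuous_const.add continuous_id).tendsto 0
      simpa using this.mono_left nhdsWithin_le_nhds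
    · filter_upwards [hmem] with ε hε
      exact ⟨by linarith [hε.1], by linarith [hε.2]⟩
  have hcw : Tendsto Φ (nhdsWithin 1 (Icc (0:ℝ) 2)) (𝓝 (Φ 1)) :=
    (hΦcont 1 (by norm_num)).tendsto
  have hT : Tendsto
      (fun ε : ℝ => Φ (1 - ε) + (Φ 2 - Φ (1 + ε)) + (∫ t in (2:ℝ)..x, 1 / Real.log t))
      (nhdsWithin 0 (Set.Ioi 0))
      (𝓝 (Φ 1 + (Φ 2 - Φ 1) + ∫ t in (2:ℝ)..x, 1 / Real.log t)) :=
    ((hcw.comp h1m).add (tendsto_const_nhds.sub (hcw.comp h1p))).add tendsto_const_nhds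
  have hval : Φ 1 + (Φ 2 - Φ 1) + (∫ t in (2:ℝ)..x, 1 / Real.log t)
      = liConst + ∫ t in (2:ℝ)..x, 1 / Real.log t := by
    simp only [liConst, hΦdef]; ring
  rw [hval] at hT
  exact hT.congr' (eventually_of_mem hmem heq)

lemma li_eq (x : ℝ) (hx : 2 ≤ x) :
    li x = liConst + ∫ t in (2:ℝ)..x, 1 / Real.log t :=
  (tendsto_pv x hx).limUnder_eq

noncomputable def liS (n : ℕ) (x : ℝ) : ℝ :=
  ∑ j ∈ Finset.Icc 1 n, (Nat.factorial (j - 1) : ℝ) * x / Real.log x ^ j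

lemma hasDerivAt_term (j : ℕ) (hj : 1 ≤ j) {t : ℝ} (ht : 1 < t) :
    HasDerivAt (fun y => (Nat.factorial (j - 1) : ℝ) * y / Real.log y ^ j)
      ((Nat.factorial (j - 1) : ℝ) / Real.log t ^ j
        - (Nat.factorial j : ℝ) / Real.log t ^ (j + 1)) t := by
  obtain ⟨k, rfl⟩ : ∃ k, j = k + 1 := ⟨j - 1, (Nat.succ_pred_eq_of_pos hj).symm⟩
  have ht0 : (0:ℝ) < t := by linarith
  have hL : 0 < Real.log t := Real.log_pos ht
  have hLne : Real.log t ≠ 0 := ne_of_gt hL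
  have hvne : Real.log t ^ (k + 1) ≠ 0 := pow_ne_zero _ hLne
  have hu : HasDerivAt (fun y : ℝ => (Nat.factorial k : ℝ) * y)
      ((Nat.factorial k : ℝ)) t := by
    simpa using (hasDerivAt_id t).const_mul (Nat.factorial k : ℝ)
  have hv : HasDerivAt (fun y : ℝ => Real.log y ^ (k + 1))
      ((k + 1 : ℕ) * Real.log t ^ k * t⁻¹) t := by
    have := (Real.hasDerivAt_log (ne_of_gt ht0)).pow (k + 1)
    exact this.congr_deriv (by simp)
  have hdiv := hu.div hv hvne
  have hfact : (Nat.factorial (k + 1) : ℝ) = (k + 1 : ℕ) * (Nat.factorial k : ℝ) := by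
    rw [Nat.factorial_succ]; push_cast; ring
  exact hdiv.congr_deriv (by rw [hfact, Nat.add_sub_cancel]; field_simp; ring)

lemma sum_deriv_eq (n : ℕ) (L : ℝ) :
    ∑ j ∈ Finset.Icc 1 n,
        ((Nat.factorial (j - 1) : ℝ) / L ^ j - (Nat.factorial j : ℝ) / L ^ (j + 1))
      = 1 / L - (Nat.factorial n : ℝ) / L ^ (n + 1) := by
  rw [← Finset.Ico_add_one_right_eq_Icc, Finset.sum_Ico_eq_sum_range]
  simp only [Nat.add_sub_cancel]
  have : ∀ i ∈ Finset.range n,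
      ((Nat.factorial (1 + i - 1) : ℝ) / L ^ (1 + i) - (Nat.factorial (1 + i) : ℝ) / L ^ (1 + i + 1))
        = (fun i => (Nat.factorial i : ℝ) / L ^ (i + 1)) i
          - (fun i => (Nat.factorial i : ℝ) / L ^ (i + 1)) (i + 1) := by
    intro i _
    have h1 : 1 + i - 1 = i := by omega
    have h2 : 1 + i = i + 1 := by omega
    rw [h1, h2]
  rw [Finset.sum_congr rfl this, Finset.sum_range_sub']
  simp [Nat.factorial]

lemma invlogpow_intIntegrable (m : ℕ) {a b : ℝ} (ha : 1 < a) (hb : 1 < b) :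
    IntervalIntegrable (fun t => 1 / Real.log t ^ m) volume a b := by
  apply ContinuousOn.intervalIntegrable
  intro t ht
  have h1t : 1 < t := lt_of_lt_of_le (lt_min ha hb) ht.1
  have hlog : Real.log t ^ m ≠ 0 := pow_ne_zero _ (ne_of_gt (Real.log_pos h1t))
  exact (continuousAt_const.div
    ((Real.continuousAt_log (by linarith)).pow m) hlog).continuousWithinAt

lemma integral_invlog_eq (n : ℕ) (hn : 1 ≤ n) (x : ℝ) (hx : 2 ≤ x) :
    ∫ t in (2:ℝ)..x, 1 / Real.log t
      = (liS n x - liS n 2)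
        + (Nat.factorial n : ℝ) * ∫ t in (2:ℝ)..x, 1 / Real.log t ^ (n + 1) := by
  have hderiv : ∀ t ∈ uIcc (2:ℝ) x, HasDerivAt (liS n)
      (1 / Real.log t - (Nat.factorial n : ℝ) * (1 / Real.log t ^ (n + 1))) t := by
    intro t ht
    rw [uIcc_of_le hx] at ht
    have h1t : (1:ℝ) < t := by have := ht.1; linarith
    have hsum : HasDerivAt (liS n)
        (∑ j ∈ Finset.Icc 1 n,
          ((Nat.factorial (j - 1) : ℝ) / Real.log t ^ j
            - (Nat.factorial j : ℝ) / Real.log t ^ (j + 1))) t := by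
      apply HasDerivAt.fun_sum
      intro j hj
      exact hasDerivAt_term j (Finset.mem_Icc.mp hj).1 h1t
    rw [sum_deriv_eq] at hsum
    convert hsum using 1
    ring
  have hint1 : IntervalIntegrable (fun t => 1 / Real.log t) volume 2 x :=
    invlog_intIntegrable (by norm_num) (by linarith)
  have hint2 : IntervalIntegrable (fun t => (Nat.factorial n : ℝ) * (1 / Real.log t ^ (n + 1)))
      volume 2 x :=
    (invlogpow_intIntegrable (n + 1) (by norm_num) (by linarith)).const_mul _
  have hkey := integral_eq_sub_of_hasDerivAt hderiv (hint1.sub hint2)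
  rw [integral_sub hint1 hint2, intervalIntegral.integral_const_mul] at hkey
  linarith [hkey]

lemma logpow_le_sqrt (m : ℕ) : ∀ᶠ x : ℝ in atTop, Real.log x ^ m ≤ Real.sqrt x := by
  have h := isLittleO_log_rpow_rpow_atTop (s := 1/2) (m : ℝ) (by norm_num)
  filter_upwards [h.def one_pos, eventually_ge_atTop 1] with x hb hx1
  have hx0 : (0:ℝ) ≤ x := by linarith
  have hl0 : (0:ℝ) ≤ Real.log x := Real.log_nonneg hx1
  rw [Real.norm_eq_abs, Real.norm_eq_abs, one_mul, Real.rpow_natCast,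
    abs_of_nonneg (pow_nonneg hl0 m), abs_of_nonneg (Real.rpow_nonneg hx0 _)] at hb
  rwa [Real.sqrt_eq_rpow]

lemma sqrt_le_div_logpow (m : ℕ) :
    ∀ᶠ x : ℝ in atTop, Real.sqrt x ≤ x / Real.log x ^ m := by
  filter_upwards [logpow_le_sqrt m, eventually_ge_atTop 2] with x hls hx2
  have hx0 : (0:ℝ) ≤ x := by linarith
  have hlx : 0 < Real.log x := Real.log_pos (by linarith)
  have hlxm : 0 < Real.log x ^ m := pow_pos hlx m
  have hsq0 : 0 < Real.sqrt x := Real.sqrt_pos.mpr (by linarith)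
  calc Real.sqrt x = x / Real.sqrt x := (Real.div_sqrt).symm
    _ ≤ x / Real.log x ^ m := by
        apply div_le_div_of_nonneg_left hx0 hlxm hls

lemma intP_bigO (m : ℕ) :
    (fun x : ℝ => ∫ t in (2:ℝ)..x, 1 / Real.log t ^ m) =O[atTop]
      fun x : ℝ => x / Real.log x ^ m := by
  rw [Asymptotics.isBigO_iff]
  refine ⟨(1 / Real.log 2) ^ m + 2 ^ m, ?_⟩
  filter_upwards [eventually_ge_atTop 4, sqrt_le_div_logpow m] with x hx4 hdsq
  set s := Real.sqrt x with hs
  have hx0 : (0:ℝ) < x := by linarith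
  have hssq : s ^ 2 = x := Real.sq_sqrt (le_of_lt hx0)
  have hs0 : 0 ≤ s := Real.sqrt_nonneg x
  have hs2 : 2 ≤ s := by nlinarith
  have hsx : s ≤ x := by nlinarith
  have h1x : (1:ℝ) < x := by linarith
  have hlx : 0 < Real.log x := Real.log_pos h1x
  have hlxm : 0 < Real.log x ^ m := pow_pos hlx m
  have hl2 : 0 < Real.log 2 := Real.log_pos (by norm_num)
  have hls : Real.log s = Real.log x / 2 := Real.log_sqrt (le_of_lt hx0)
  have hls0 : 0 < Real.log s := by rw [hls]; positivity
  have hsplit : (∫ t in (2:ℝ)..x, 1 / Real.log t ^ m)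
      = (∫ t in (2:ℝ)..s, 1 / Real.log t ^ m) + ∫ t in s..x, 1 / Real.log t ^ m :=
    (integral_add_adjacent_intervals
      (invlogpow_intIntegrable m (by norm_num) (by linarith))
      (invlogpow_intIntegrable m (by linarith) (by linarith))).symm
  have hb1 : ‖∫ t in (2:ℝ)..s, 1 / Real.log t ^ m‖ ≤ (1 / Real.log 2) ^ m * (s - 2) := by
    have := norm_integral_le_of_norm_le_const (C := (1 / Real.log 2) ^ m)
      (f := fun t => 1 / Real.log t ^ m) (a := 2) (b := s) ?_
    · rwa [abs_of_nonneg (by linarith : (0:ℝ) ≤ s - 2)] at this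
    · intro t ht
      rw [uIoc_of_le hs2] at ht
      have h2t : (2:ℝ) ≤ t := le_of_lt ht.1
      have hlt : Real.log 2 ≤ Real.log t := Real.log_le_log (by norm_num) h2t
      have hltm : 0 < Real.log t ^ m := pow_pos (lt_of_lt_of_le hl2 hlt) m
      rw [Real.norm_eq_abs, abs_of_nonneg (by positivity), one_div_pow]
      exact one_div_le_one_div_of_le (pow_pos hl2 m) (pow_le_pow_left₀ (le_of_lt hl2) hlt m)
  have hb2 : ‖∫ t in s..x, 1 / Real.log t ^ m‖ ≤ (2 ^ m / Real.log x ^ m) * (x - s) := by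
    have := norm_integral_le_of_norm_le_const (C := 2 ^ m / Real.log x ^ m)
      (f := fun t => 1 / Real.log t ^ m) (a := s) (b := x) ?_
    · rwa [abs_of_nonneg (by linarith : (0:ℝ) ≤ x - s)] at this
    · intro t ht
      rw [uIoc_of_le hsx] at ht
      have hst : s ≤ t := le_of_lt ht.1
      have hlt : Real.log s ≤ Real.log t := Real.log_le_log (by positivity) hst
      have hltm : 0 < Real.log t ^ m := pow_pos (lt_of_lt_of_le hls0 hlt) m
      rw [Real.norm_eq_abs, abs_of_nonneg (by positivity)]
      have e1 : (2:ℝ) ^ m / Real.log x ^ m = 1 / Real.log s ^ m := by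
        rw [hls, div_pow, one_div_div]
      rw [e1]
      exact one_div_le_one_div_of_le (pow_pos hls0 m) (pow_le_pow_left₀ (le_of_lt hls0) hlt m)
  have hd0 : 0 < x / Real.log x ^ m := div_pos hx0 hlxm
  have hc1 : (0:ℝ) ≤ (1 / Real.log 2) ^ m := by positivity
  have e1 : (1 / Real.log 2) ^ m * (s - 2) ≤ (1 / Real.log 2) ^ m * (x / Real.log x ^ m) :=
    mul_le_mul_of_nonneg_left (by linarith) hc1
  have e2 : (2 ^ m / Real.log x ^ m) * (x - s) ≤ 2 ^ m * (x / Real.log x ^ m) := by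
    rw [div_mul_eq_mul_div, mul_div_assoc]
    exact mul_le_mul_of_nonneg_left
      ((div_le_div_iff_of_pos_right hlxm).mpr (by linarith)) (by positivity)
  rw [Real.norm_eq_abs (x / Real.log x ^ m), abs_of_pos hd0]
  calc ‖∫ t in (2:ℝ)..x, 1 / Real.log t ^ m‖
      ≤ ‖∫ t in (2:ℝ)..s, 1 / Real.log t ^ m‖ + ‖∫ t in s..x, 1 / Real.log t ^ m‖ := by
        rw [hsplit]; exact norm_add_le _ _
    _ ≤ (1 / Real.log 2) ^ m * (x / Real.log x ^ m) + 2 ^ m * (x / Real.log x ^ m) := by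
        linarith
    _ = ((1 / Real.log 2) ^ m + 2 ^ m) * (x / Real.log x ^ m) := by ring

/-- For every fixed `n ≥ 1`,
`li x = ∑_{j=1}^n (j-1)! x / log^j x + O(x / log^{n+1} x)` as `x → ∞`. -/
theorem li_asymptotic (n : ℕ) (hn : 1 ≤ n) :
    (fun x : ℝ =>
        li x - ∑ j ∈ Finset.Icc 1 n, (Nat.factorial (j - 1) : ℝ) * x / Real.log x ^ j)
      =O[atTop] fun x : ℝ => x / Real.log x ^ (n + 1) := by
  have key : (fun x : ℝ => (liConst - liS n 2)
        + (Nat.factorial n : ℝ) * ∫ t in (2:ℝ)..x, 1 / Real.log t ^ (n + 1))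
      =ᶠ[atTop] (fun x : ℝ =>
        li x - ∑ j ∈ Finset.Icc 1 n, (Nat.factorial (j - 1) : ℝ) * x / Real.log x ^ j) := by
    filter_upwards [eventually_ge_atTop 2] with x hx
    have h1 := li_eq x hx
    have h2 := integral_invlog_eq n hn x hx
    have h3 : (∑ j ∈ Finset.Icc 1 n, (Nat.factorial (j - 1) : ℝ) * x / Real.log x ^ j)
        = liS n x := rfl
    rw [h3, h1, h2]; ring
  refine Asymptotics.IsBigO.congr' ?_ key EventuallyEq.rfl
  apply Asymptotics.IsBigO.add
  · rw [Asymptotics.isBigO_iff]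
    refine ⟨‖liConst - liS n 2‖, ?_⟩
    filter_upwards [sqrt_le_div_logpow (n + 1), eventually_ge_atTop 2] with x hd hx2
    have h1 : (1:ℝ) ≤ Real.sqrt x := by
      rw [show (1:ℝ) = Real.sqrt 1 by simp]
      exact Real.sqrt_le_sqrt (by linarith)
    have hlx : 0 < Real.log x := Real.log_pos (by linarith)
    have hd0 : 0 < x / Real.log x ^ (n + 1) := div_pos (by linarith) (pow_pos hlx _)
    rw [Real.norm_eq_abs (x / _), abs_of_pos hd0]
    calc ‖liConst - liS n 2‖ = ‖liConst - liS n 2‖ * 1 := (mul_one _).symm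
      _ ≤ ‖liConst - liS n 2‖ * (x / Real.log x ^ (n + 1)) :=
          mul_le_mul_of_nonneg_left (by linarith) (norm_nonneg _)
  · exact (intP_bigO (n + 1)).const_mul_left _
end

section
/- Let $s, i, t \in \mathbb{N}_0$ with $s \geq 1$ and $i \leq s$, and let $b_{s,i,j,r}$ be the integers defined by the recurrence below. Then as $n \to \infty$, $\int_3^n \frac{x(\log \log x)^i}{\log^s x}\, dx = \sum_{j=0}^t \sum_{r=0}^{\min\{i,j\}} \frac{b_{s,i,j,r}\, n^2(\log \log n)^{i-r}}{2^{j+1}\log^{s+j}n} + \int_3^n \sum_{r=0}^{\min\{i,t+1\}} \frac{b_{s,i,t+1,r}\, x(\log \log x)^{i-r}}{2^{t+1}\log^{s+t+1}x} \,dx + O(1)$. -/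
/-- The recurrence defining the integers `b s i j r` (for `r ≤ j`):
`b s i 0 0 = 1`; for `j ≥ 1`, `b s i j j = b s i (j-1) (j-1) * (-(i-(j-1)))`;
for `j ≥ 1`, `b s i j 0 = b s i (j-1) 0 * (s+j-1)`; and for `j > r ≥ 1`,
`b s i j r = b s i (j-1) r * (s+j-1) + b s i (j-1) (r-1) * (-(i-(r-1)))`. -/
def BRec (b : ℕ → ℕ → ℕ → ℕ → ℤ) : Prop :=
  (∀ s i : ℕ, b s i 0 0 = 1) ∧
  (∀ s i j : ℕ, 1 ≤ j →
    b s i j j = b s i (j - 1) (j - 1) * (-((i : ℤ) - ((j : ℤ) - 1)))) ∧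
  (∀ s i j : ℕ, 1 ≤ j →
    b s i j 0 = b s i (j - 1) 0 * ((s : ℤ) + (j : ℤ) - 1)) ∧
  (∀ s i j r : ℕ, 1 ≤ r → r < j →
    b s i j r = b s i (j - 1) r * ((s : ℤ) + (j : ℤ) - 1)
      + b s i (j - 1) (r - 1) * (-((i : ℤ) - ((r : ℤ) - 1))))


open Filter Real

namespace IBPAux

lemma log_gt_one_of (x : ℝ) (hx : 3 ≤ x) : 1 < Real.log x := by
  have hx0 : (0:ℝ) < x := by linarith
  rw [show (1:ℝ) = Real.log (Real.exp 1) by simp]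
  refine Real.log_lt_log (Real.exp_pos 1) ?_
  have := Real.exp_one_lt_d9
  linarith

lemma hasDerivAt_term (k m : ℕ) (hm : 1 ≤ m) (x : ℝ) (hx : 3 ≤ x) :
    HasDerivAt (fun y : ℝ => y ^ 2 * Real.log (Real.log y) ^ k / Real.log y ^ m)
      (2 * x * Real.log (Real.log x) ^ k / Real.log x ^ m
        + (k : ℝ) * x * Real.log (Real.log x) ^ (k - 1) / Real.log x ^ (m + 1)
        - (m : ℝ) * x * Real.log (Real.log x) ^ k / Real.log x ^ (m + 1)) x := by
  have hx0 : (0:ℝ) < x := by linarith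
  have hlx : 1 < Real.log x := log_gt_one_of x hx
  have hlx0 : Real.log x ≠ 0 := by linarith
  have hxne : x ≠ 0 := ne_of_gt hx0
  have h1 : HasDerivAt Real.log x⁻¹ x := Real.hasDerivAt_log hxne
  have h2 : HasDerivAt (fun y : ℝ => Real.log (Real.log y)) ((Real.log x)⁻¹ * x⁻¹) x :=
    (Real.hasDerivAt_log hlx0).comp x h1
  have h3 := h2.fun_pow k
  have h4 : HasDerivAt (fun y : ℝ => y ^ 2) (2 * x) x := by
    simpa using hasDerivAt_pow 2 x
  have h5 := h4.fun_mul h3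
  have h6 := h1.fun_pow m
  have h7 := h5.fun_div h6 (pow_ne_zero m hlx0)
  refine h7.congr_deriv ?_
  obtain ⟨m', rfl⟩ : ∃ m', m = m' + 1 := ⟨m - 1, (Nat.succ_pred_eq_of_pos hm).symm⟩
  rcases k with _ | k'
  · simp only [pow_zero, Nat.zero_sub, Nat.cast_zero, Nat.add_sub_cancel]
    field_simp
    ring
  · simp only [Nat.succ_sub_one, Nat.add_sub_cancel]
    field_simp
    ring

lemma core (b : ℕ → ℕ → ℕ → ℕ → ℤ) (hb : BRec b) (s i j : ℕ) (M : ℝ) :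
    ∑ r ∈ Finset.range (min i j + 1),
        (b s i j r : ℝ) * (((i - r : ℕ) : ℝ) * M ^ (i - r - 1) - ((s + j : ℕ) : ℝ) * M ^ (i - r))
      = - ∑ r ∈ Finset.range (min i (j + 1) + 1), (b s i (j + 1) r : ℝ) * M ^ (i - r) := by
  have hrow0 : (b s i (j+1) 0 : ℝ) = (b s i j 0 : ℝ) * ((s : ℝ) + (j : ℝ)) := by
    have hz := hb.2.2.1 s i (j+1) (by omega)
    simp only [Nat.add_sub_cancel] at hz
    rw [hz]; push_cast; ring
  have hrow : ∀ r' : ℕ, r' + 1 ≤ j → r' < i →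
      (b s i (j+1) (r'+1) : ℝ) = (b s i j (r'+1) : ℝ) * ((s : ℝ) + (j : ℝ))
        + (b s i j r' : ℝ) * (-(((i : ℝ)) - (r' : ℝ))) := by
    intro r' h1 h2
    have hz := hb.2.2.2 s i (j+1) (r'+1) (by omega) (by omega)
    simp only [Nat.add_sub_cancel] at hz
    rw [hz]; push_cast; ring
  set T : ℕ → ℝ := fun r => if r = 0 then 0
    else (b s i j (r-1) : ℝ) * ((i - (r-1) : ℕ) : ℝ) * M ^ (i - r) with hT
  set R := min i j with hR
  have hLHS : ∑ r ∈ Finset.range (R + 1),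
        (b s i j r : ℝ) * (((i - r : ℕ) : ℝ) * M ^ (i - r - 1) - ((s + j : ℕ) : ℝ) * M ^ (i - r))
      = ∑ r ∈ Finset.range (R + 2), T r
        - ∑ r ∈ Finset.range (R + 1), ((s + j : ℕ) : ℝ) * (b s i j r : ℝ) * M ^ (i - r) := by
    rw [Finset.sum_range_succ' T (R + 1)]
    simp only [hT, Nat.add_sub_cancel, if_neg (Nat.succ_ne_zero _), if_pos rfl, add_zero]
    rw [← Finset.sum_sub_distrib]
    refine Finset.sum_congr rfl fun r hr => ?_
    have : i - r - 1 = i - (r + 1) := by omega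
    rw [this]; ring
  rw [hLHS]
  rcases le_or_gt i j with hij | hij
  · have h1 : R = i := by simp [hR, hij]
    have h2 : min i (j + 1) = i := by omega
    rw [h1, h2, Finset.sum_range_succ (f := T) (n := i + 1)]
    have hTtop : T (i + 1) = 0 := by
      simp [hT, Nat.sub_self]
    rw [hTtop, add_zero, ← Finset.sum_sub_distrib, ← Finset.sum_neg_distrib]
    refine Finset.sum_congr rfl fun r hr => ?_
    have hri : r ≤ i := by simp at hr; omega
    rcases r with _ | r'
    · simp only [hT, if_pos rfl]
      rw [hrow0]; push_cast; ring
    · simp only [hT, if_neg (Nat.succ_ne_zero _), Nat.add_sub_cancel]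
      rw [hrow r' (by omega) (by omega)]
      rw [Nat.cast_sub (by omega : r' ≤ i)]
      push_cast; ring
  · have h1 : R = j := by simp [hR]; omega
    have h2 : min i (j + 1) = j + 1 := by omega
    rw [h1, h2, Finset.sum_range_succ (f := T) (n := j + 1),
      Finset.sum_range_succ (f := fun r => (b s i (j+1) r : ℝ) * M ^ (i - r)) (n := j + 1)]
    have hTtop : T (j + 1) = -((b s i (j+1) (j+1) : ℝ) * M ^ (i - (j+1))) := by
      simp only [hT, if_neg (Nat.succ_ne_zero _), Nat.add_sub_cancel]
      have hz := hb.2.1 s i (j+1) (by omega)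
      simp only [Nat.add_sub_cancel] at hz
      rw [hz, Nat.cast_sub (by omega : j ≤ i)]
      push_cast; ring
    rw [hTtop, neg_add, ← Finset.sum_neg_distrib]
    have key : ∑ r ∈ Finset.range (j + 1), T r
        - ∑ r ∈ Finset.range (j + 1), ((s + j : ℕ) : ℝ) * (b s i j r : ℝ) * M ^ (i - r)
        = ∑ r ∈ Finset.range (j + 1), -((b s i (j+1) r : ℝ) * M ^ (i - r)) := by
      rw [← Finset.sum_sub_distrib]
      refine Finset.sum_congr rfl fun r hr => ?_
      have hrj : r ≤ j := by simp at hr; omega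
      rcases r with _ | r'
      · simp only [hT, if_pos rfl]
        rw [hrow0]; push_cast; ring
      · simp only [hT, if_neg (Nat.succ_ne_zero _), Nat.add_sub_cancel]
        rw [hrow r' (by omega) (by omega)]
        rw [Nat.cast_sub (by omega : r' ≤ i)]
        push_cast; ring
    linarith [key]

noncomputable def Ee (b : ℕ → ℕ → ℕ → ℕ → ℤ) (s i j : ℕ) (x : ℝ) : ℝ :=
  ∑ r ∈ Finset.range (min i j + 1),
    (b s i j r : ℝ) / 2 ^ j * (x * Real.log (Real.log x) ^ (i - r) / Real.log x ^ (s + j))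

noncomputable def Gg (b : ℕ → ℕ → ℕ → ℕ → ℤ) (s i j : ℕ) (x : ℝ) : ℝ :=
  ∑ r ∈ Finset.range (min i j + 1),
    (b s i j r : ℝ) / 2 ^ (j + 1) *
      (x ^ 2 * Real.log (Real.log x) ^ (i - r) / Real.log x ^ (s + j))

lemma contOn_Ee (b : ℕ → ℕ → ℕ → ℕ → ℤ) (s i j : ℕ) :
    ContinuousOn (Ee b s i j) (Set.Ici (3:ℝ)) := by
  have hlog1 : ∀ x ∈ Set.Ici (3:ℝ), 1 < Real.log x := fun x hx => log_gt_one_of x hx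
  have hlog : ContinuousOn Real.log (Set.Ici (3:ℝ)) := by
    refine Real.continuousOn_log.mono ?_
    intro x hx; simp at hx ⊢; intro h; rw [h] at hx; norm_num at hx
  have hll : ContinuousOn (fun x : ℝ => Real.log (Real.log x)) (Set.Ici (3:ℝ)) := by
    refine Real.continuousOn_log.comp hlog ?_
    intro x hx
    have := hlog1 x hx
    simp only [Set.mem_compl_iff, Set.mem_singleton_iff]
    intro h; rw [h] at this; norm_num at this
  unfold Ee
  refine continuousOn_finset_sum _ fun r _ => ?_
  refine ContinuousOn.mul continuousOn_const ?_
  refine ContinuousOn.div (ContinuousOn.mul (continuousOn_id) (hll.pow _)) (hlog.pow _) ?_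
  intro x hx
  have := hlog1 x hx
  exact pow_ne_zero _ (by linarith)

lemma hasDerivAt_Gg (b : ℕ → ℕ → ℕ → ℕ → ℤ) (hb : BRec b) (s i j : ℕ) (hs : 1 ≤ s)
    (x : ℝ) (hx : 3 ≤ x) :
    HasDerivAt (Gg b s i j) (Ee b s i j x - Ee b s i (j + 1) x) x := by
  have hlx : 1 < Real.log x := log_gt_one_of x hx
  have hlx0 : Real.log x ≠ 0 := by linarith
  set M := Real.log (Real.log x) with hM
  set L := Real.log x with hL
  have hD : HasDerivAt (Gg b s i j)
      (∑ r ∈ Finset.range (min i j + 1),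
        (b s i j r : ℝ) / 2 ^ (j + 1) *
          (2 * x * M ^ (i - r) / L ^ (s + j)
            + ((i - r : ℕ) : ℝ) * x * M ^ (i - r - 1) / L ^ (s + j + 1)
            - ((s + j : ℕ) : ℝ) * x * M ^ (i - r) / L ^ (s + j + 1))) x := by
    unfold Gg
    refine HasDerivAt.fun_sum fun r _ => ?_
    exact (hasDerivAt_term (i - r) (s + j) (by omega) x hx).const_mul _
  convert hD using 1
  have hsplit : ∀ r ∈ Finset.range (min i j + 1),
      (b s i j r : ℝ) / 2 ^ (j + 1) *
          (2 * x * M ^ (i - r) / L ^ (s + j)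
            + ((i - r : ℕ) : ℝ) * x * M ^ (i - r - 1) / L ^ (s + j + 1)
            - ((s + j : ℕ) : ℝ) * x * M ^ (i - r) / L ^ (s + j + 1))
      = (b s i j r : ℝ) / 2 ^ j * (x * M ^ (i - r) / L ^ (s + j))
        + x / (2 ^ (j + 1) * L ^ (s + j + 1)) *
            ((b s i j r : ℝ) * (((i - r : ℕ) : ℝ) * M ^ (i - r - 1)
              - ((s + j : ℕ) : ℝ) * M ^ (i - r))) := by
    intro r _
    ring
  rw [Finset.sum_congr rfl hsplit, Finset.sum_add_distrib, ← Finset.mul_sum,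
    core b hb s i j M]
  have hEe1 : Ee b s i (j + 1) x
      = x / (2 ^ (j + 1) * L ^ (s + j + 1)) *
          ∑ r ∈ Finset.range (min i (j + 1) + 1), (b s i (j + 1) r : ℝ) * M ^ (i - r) := by
    unfold Ee
    rw [Finset.mul_sum]
    refine Finset.sum_congr rfl fun r _ => ?_
    rw [← hM, ← hL, show s + (j + 1) = s + j + 1 from by omega]
    ring
  rw [hEe1]
  unfold Ee
  rw [← hM, ← hL]
  ring

lemma step (b : ℕ → ℕ → ℕ → ℕ → ℤ) (hb : BRec b) (s i j : ℕ) (hs : 1 ≤ s)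
    (n : ℝ) (hn : 3 ≤ n) :
    ∫ x in (3:ℝ)..n, Ee b s i j x
      = Gg b s i j n - Gg b s i j 3 + ∫ x in (3:ℝ)..n, Ee b s i (j + 1) x := by
  have hsub : Set.uIcc (3:ℝ) n ⊆ Set.Ici (3:ℝ) := by
    rw [Set.uIcc_of_le hn]
    exact fun x hx => hx.1
  have hint1 : IntervalIntegrable (Ee b s i j) MeasureTheory.volume 3 n :=
    ((contOn_Ee b s i j).mono hsub).intervalIntegrable
  have hint2 : IntervalIntegrable (Ee b s i (j+1)) MeasureTheory.volume 3 n :=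
    ((contOn_Ee b s i (j+1)).mono hsub).intervalIntegrable
  have key := intervalIntegral.integral_eq_sub_of_hasDerivAt
    (f := Gg b s i j) (f' := fun x => Ee b s i j x - Ee b s i (j + 1) x)
    (fun x hx => hasDerivAt_Gg b hb s i j hs x (hsub hx).out)
    (hint1.sub hint2)
  rw [intervalIntegral.integral_sub hint1 hint2] at key
  linarith

lemma tele (b : ℕ → ℕ → ℕ → ℕ → ℤ) (hb : BRec b) (s i : ℕ) (hs : 1 ≤ s)
    (t : ℕ) (n : ℝ) (hn : 3 ≤ n) :
    ∫ x in (3:ℝ)..n, Ee b s i 0 x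
      = ∑ j ∈ Finset.range (t + 1), (Gg b s i j n - Gg b s i j 3)
        + ∫ x in (3:ℝ)..n, Ee b s i (t + 1) x := by
  induction t with
  | zero => simpa using step b hb s i 0 hs n hn
  | succ t ih =>
      rw [Finset.sum_range_succ, ih, step b hb s i (t + 1) hs n hn]
      ring

end IBPAux

/-- For `s ≥ 1`, `i ≤ s` and every `t ∈ ℕ₀`, as `n → ∞`:
`∫_3^n x (log log x)^i / log^s x dx
  = ∑_{j=0}^t ∑_{r=0}^{min(i,j)} b_{s,i,j,r} n² (log log n)^{i-r} / (2^{j+1} log^{s+j} n)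
    + ∫_3^n ∑_{r=0}^{min(i,t+1)} b_{s,i,t+1,r} x (log log x)^{i-r} / (2^{t+1} log^{s+t+1} x) dx
    + O(1)`. -/
theorem integral_iterated_by_parts (b : ℕ → ℕ → ℕ → ℕ → ℤ) (hb : BRec b)
    (s i t : ℕ) (hs : 1 ≤ s) (hi : i ≤ s) :
    (fun n : ℝ =>
        (∫ x in (3 : ℝ)..n, x * Real.log (Real.log x) ^ i / Real.log x ^ s) -
          (∑ j ∈ Finset.range (t + 1), ∑ r ∈ Finset.range (min i j + 1),
              (b s i j r : ℝ) * n ^ 2 * Real.log (Real.log n) ^ (i - r) /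
                (2 ^ (j + 1) * Real.log n ^ (s + j))) -
          ∫ x in (3 : ℝ)..n,
            ∑ r ∈ Finset.range (min i (t + 1) + 1),
              (b s i (t + 1) r : ℝ) * x * Real.log (Real.log x) ^ (i - r) /
                (2 ^ (t + 1) * Real.log x ^ (s + t + 1)))
      =O[atTop] fun _ : ℝ => (1 : ℝ) := by
  have heq : ∀ n : ℝ, 3 ≤ n →
      (∫ x in (3 : ℝ)..n, x * Real.log (Real.log x) ^ i / Real.log x ^ s) -
          (∑ j ∈ Finset.range (t + 1), ∑ r ∈ Finset.range (min i j + 1),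
              (b s i j r : ℝ) * n ^ 2 * Real.log (Real.log n) ^ (i - r) /
                (2 ^ (j + 1) * Real.log n ^ (s + j))) -
          (∫ x in (3 : ℝ)..n,
            ∑ r ∈ Finset.range (min i (t + 1) + 1),
              (b s i (t + 1) r : ℝ) * x * Real.log (Real.log x) ^ (i - r) /
                (2 ^ (t + 1) * Real.log x ^ (s + t + 1)))
        = -∑ j ∈ Finset.range (t + 1), IBPAux.Gg b s i j 3 := by
    intro n hn
    have h1 : (fun x : ℝ => x * Real.log (Real.log x) ^ i / Real.log x ^ s)
        = IBPAux.Ee b s i 0 := by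
      funext x
      simp [IBPAux.Ee, hb.1]
    have h3 : (fun x : ℝ => ∑ r ∈ Finset.range (min i (t + 1) + 1),
          (b s i (t + 1) r : ℝ) * x * Real.log (Real.log x) ^ (i - r) /
            (2 ^ (t + 1) * Real.log x ^ (s + t + 1)))
        = IBPAux.Ee b s i (t + 1) := by
      funext x
      unfold IBPAux.Ee
      refine Finset.sum_congr rfl fun r _ => ?_
      rw [show s + (t + 1) = s + t + 1 from rfl]
      ring
    have h2 : ∀ j, (∑ r ∈ Finset.range (min i j + 1),
          (b s i j r : ℝ) * n ^ 2 * Real.log (Real.log n) ^ (i - r) /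
            (2 ^ (j + 1) * Real.log n ^ (s + j))) = IBPAux.Gg b s i j n := by
      intro j
      unfold IBPAux.Gg
      exact Finset.sum_congr rfl fun r _ => by ring
    rw [h1, h3, Finset.sum_congr rfl (fun j _ => h2 j),
      IBPAux.tele b hb s i hs t n hn, Finset.sum_sub_distrib]
    ring
  have hev : (fun n : ℝ =>
        (∫ x in (3 : ℝ)..n, x * Real.log (Real.log x) ^ i / Real.log x ^ s) -
          (∑ j ∈ Finset.range (t + 1), ∑ r ∈ Finset.range (min i j + 1),
              (b s i j r : ℝ) * n ^ 2 * Real.log (Real.log n) ^ (i - r) /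
                (2 ^ (j + 1) * Real.log n ^ (s + j))) -
          ∫ x in (3 : ℝ)..n,
            ∑ r ∈ Finset.range (min i (t + 1) + 1),
              (b s i (t + 1) r : ℝ) * x * Real.log (Real.log x) ^ (i - r) /
                (2 ^ (t + 1) * Real.log x ^ (s + t + 1)))
      =ᶠ[atTop] fun _ : ℝ => -∑ j ∈ Finset.range (t + 1), IBPAux.Gg b s i j 3 := by
    filter_upwards [eventually_ge_atTop (3:ℝ)] with n hn using heq n hn
  exact hev.trans_isBigO (Asymptotics.isBigO_const_const _ one_ne_zero _)
end

section
/- Let $m \in \mathbb{N}$, let $s, i \in \mathbb{N}_0$ with $1 \leq s \leq m$ and $0 \leq i \leq s$, and let $b_{s,i,j,r}$ be the integers defined by the recurrence below. Then as $n \to \infty$, $\int_3^n \frac{x(\log \log x)^i}{\log^s x}\, dx = \sum_{j=0}^{m-s} \sum_{r=0}^{\min\{i,j\}} \frac{b_{s,i,j,r}\, n^2(\log \log n)^{i-r}}{2^{j+1}\log^{s+j}n} + O\left( \frac{n^2(\log \log n)^i}{\log^{m+1}n} \right)$. -/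
open Filter Real

lemma contOn_base (a c : ℕ) :
    ContinuousOn (fun x : ℝ => x * Real.log (Real.log x) ^ a / Real.log x ^ c) (Set.Ici 2) := by
  have hsub : Set.Ici (2:ℝ) ⊆ {0}ᶜ := by
    intro x hx
    simp only [Set.mem_Ici] at hx
    simp only [Set.mem_compl_iff, Set.mem_singleton_iff]
    intro h; rw [h] at hx; norm_num at hx
  have hL : ContinuousOn Real.log (Set.Ici (2:ℝ)) := Real.continuousOn_log.mono hsub
  have hLpos : ∀ x ∈ Set.Ici (2:ℝ), 0 < Real.log x := fun x hx =>
    Real.log_pos (lt_of_lt_of_le one_lt_two hx)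
  have hLL : ContinuousOn (fun x : ℝ => Real.log (Real.log x)) (Set.Ici 2) := by
    apply Real.continuousOn_log.comp hL
    intro x hx
    simp only [Set.mem_compl_iff, Set.mem_singleton_iff]
    exact (hLpos x hx).ne'
  exact (continuousOn_id.mul (hLL.pow a)).div (hL.pow c)
    (fun x hx => pow_ne_zero _ (hLpos x hx).ne')

lemma hasDerivAt_base (a c : ℕ) (x : ℝ) (hx : 2 ≤ x) :
    HasDerivAt (fun y : ℝ => y ^ 2 * Real.log (Real.log y) ^ a / Real.log y ^ c)
      (2 * x * Real.log (Real.log x) ^ a / Real.log x ^ c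
        + (a : ℝ) * x * Real.log (Real.log x) ^ (a - 1) / Real.log x ^ (c + 1)
        - (c : ℝ) * x * Real.log (Real.log x) ^ a / Real.log x ^ (c + 1)) x := by
  have hx0 : (0:ℝ) < x := by linarith
  have hL : 0 < Real.log x := Real.log_pos (by linarith)
  have h1 : HasDerivAt Real.log x⁻¹ x := Real.hasDerivAt_log hx0.ne'
  have h2 : HasDerivAt (fun y : ℝ => Real.log (Real.log y)) ((Real.log x)⁻¹ * x⁻¹) x := by
    exact (Real.hasDerivAt_log hL.ne').comp x h1
  have h3 := h2.fun_pow a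
  have h4 : HasDerivAt (fun y : ℝ => y ^ 2) (2 * x) x := by
    simpa using hasDerivAt_pow 2 x
  have h5 := h4.fun_mul h3
  have h6 := h1.fun_pow c
  have h7 := h5.fun_div h6 (pow_ne_zero c hL.ne')
  refine h7.congr_deriv ?_
  have hLne : Real.log x ≠ 0 := hL.ne'
  have hxne : x ≠ 0 := hx0.ne'
  cases a with
  | zero =>
    cases c with
    | zero => field_simp; ring
    | succ c => simp only [Nat.add_sub_cancel]; field_simp; ring
  | succ a =>
    cases c with
    | zero => field_simp; ring
    | succ c => simp only [Nat.add_sub_cancel]; field_simp; ring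

lemma core_id (b : ℕ → ℕ → ℕ → ℕ → ℤ) (hb : BRec b) (s i j : ℕ) (t : ℝ) :
    ∑ r ∈ Finset.range (min i j + 1),
      (b s i j r : ℝ) * (((i - r : ℕ) : ℝ) * t ^ (i - (r + 1)) - ((s : ℝ) + (j : ℝ)) * t ^ (i - r))
    = - ∑ r ∈ Finset.range (min i (j + 1) + 1), (b s i (j + 1) r : ℝ) * t ^ (i - r) := by
  obtain ⟨h0, hdiag, hzero, hmix⟩ := hb
  set g : ℕ → ℝ := fun r =>
    (if 1 ≤ r then (b s i j (r - 1) : ℝ) * ((i - (r - 1) : ℕ) : ℝ) else 0) * t ^ (i - r) with hg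
  set h : ℕ → ℝ := fun r =>
    (if r ≤ min i j then ((s : ℝ) + (j : ℝ)) * (b s i j r : ℝ) else 0) * t ^ (i - r) with hh
  have hgr : ∀ r : ℕ, 1 ≤ r → g r = (b s i j (r - 1) : ℝ) * ((i - (r - 1) : ℕ) : ℝ) * t ^ (i - r) := by
    intro r hr1; simp only [hg, if_pos hr1]
  have hg0 : g 0 = 0 := by simp [hg]
  have hhr : ∀ r : ℕ, r ≤ min i j → h r = ((s : ℝ) + (j : ℝ)) * (b s i j r : ℝ) * t ^ (i - r) := by
    intro r hr1; simp only [hh, if_pos hr1]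
  have hsplit : ∑ r ∈ Finset.range (min i j + 1),
      (b s i j r : ℝ) * (((i - r : ℕ) : ℝ) * t ^ (i - (r + 1)) - ((s : ℝ) + (j : ℝ)) * t ^ (i - r))
      = (∑ r ∈ Finset.range (min i j + 1), g (r + 1))
        - ∑ r ∈ Finset.range (min i j + 1), h r := by
    rw [← Finset.sum_sub_distrib]
    apply Finset.sum_congr rfl
    intro r hr
    simp only [Finset.mem_range] at hr
    rw [hgr (r + 1) (by omega), hhr r (by omega)]
    simp only [Nat.add_sub_cancel]
    ring
  rw [hsplit]
  have hshift : ∑ r ∈ Finset.range (min i j + 1), g (r + 1)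
      = ∑ r ∈ Finset.range (min i j + 2), g r := by
    rw [Finset.sum_range_succ' g (min i j + 1), hg0, add_zero]
  rw [hshift]
  rcases le_or_gt i j with hij | hij
  · -- case i ≤ j
    have hm1 : min i j = i := min_eq_left hij
    have hm2 : min i (j + 1) = i := min_eq_left (by omega)
    rw [hm1, hm2]
    have htop : ∑ r ∈ Finset.range (i + 2), g r = ∑ r ∈ Finset.range (i + 1), g r := by
      rw [Finset.sum_range_succ, hgr (i + 1) (by omega)]
      simp only [Nat.add_sub_cancel, Nat.sub_self, Nat.cast_zero]
      ring
    rw [htop, ← Finset.sum_sub_distrib, ← Finset.sum_neg_distrib]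
    apply Finset.sum_congr rfl
    intro r hr
    simp only [Finset.mem_range] at hr
    rcases Nat.eq_zero_or_pos r with hr0 | hr1
    · subst hr0
      rw [hg0, hhr 0 (by omega)]
      have := hzero s i (j + 1) (by omega)
      simp only [Nat.add_sub_cancel] at this
      rw [this]; push_cast; ring
    · have hr1' : 1 ≤ r := hr1
      have hrec := hmix s i (j + 1) r (by omega) (by omega)
      simp only [Nat.add_sub_cancel] at hrec
      rw [hgr r hr1', hhr r (by omega), hrec]
      have hc1 : ((i - (r - 1) : ℕ) : ℝ) = (i : ℝ) - ((r : ℝ) - 1) := by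
        rw [Nat.cast_sub (by omega : r - 1 ≤ i), Nat.cast_sub (by omega : 1 ≤ r)]
        push_cast; ring
      rw [hc1]; push_cast; ring
  · -- case j < i
    have hm1 : min i j = j := min_eq_right (by omega)
    have hm2 : min i (j + 1) = j + 1 := min_eq_right (by omega)
    rw [hm1, hm2]
    have hext : ∑ r ∈ Finset.range (j + 1), h r
        = ∑ r ∈ Finset.range (j + 2), h r := by
      rw [show j + 2 = (j + 1) + 1 from rfl, Finset.sum_range_succ (f := h) (n := j + 1)]
      have hz : h (j + 1) = 0 := by
        simp only [hh, hm1, if_neg (by omega : ¬ j + 1 ≤ j)]; ring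
      rw [hz, add_zero]
    rw [hext, ← Finset.sum_sub_distrib, ← Finset.sum_neg_distrib]
    apply Finset.sum_congr rfl
    intro r hr
    simp only [Finset.mem_range] at hr
    rcases Nat.eq_zero_or_pos r with hr0 | hr1
    · subst hr0
      rw [hg0, hhr 0 (by omega)]
      have := hzero s i (j + 1) (by omega)
      simp only [Nat.add_sub_cancel] at this
      rw [this]; push_cast; ring
    · have hr1' : 1 ≤ r := hr1
      rcases Nat.lt_or_ge r (j + 1) with hrj | hrj
      · have hrec := hmix s i (j + 1) r (by omega) (by omega)
        simp only [Nat.add_sub_cancel] at hrec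
        rw [hgr r hr1', hhr r (by omega), hrec]
        have hc1 : ((i - (r - 1) : ℕ) : ℝ) = (i : ℝ) - ((r : ℝ) - 1) := by
          rw [Nat.cast_sub (by omega : r - 1 ≤ i), Nat.cast_sub (by omega : 1 ≤ r)]
          push_cast; ring
        rw [hc1]; push_cast; ring
      · have hrj1 : r = j + 1 := by omega
        subst hrj1
        have hrec := hdiag s i (j + 1) (by omega)
        simp only [Nat.add_sub_cancel] at hrec
        have hz : h (j + 1) = 0 := by
          simp only [hh, hm1, if_neg (by omega : ¬ j + 1 ≤ j)]; ring
        rw [hgr (j + 1) (by omega), hz, hrec]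
        simp only [Nat.add_sub_cancel]
        have hc1 : ((i - j : ℕ) : ℝ) = (i : ℝ) - (j : ℝ) := by
          rw [Nat.cast_sub (by omega : j ≤ i)]
        rw [hc1]; push_cast; ring

noncomputable def Sfun (b : ℕ → ℕ → ℕ → ℕ → ℤ) (m s i : ℕ) : ℝ → ℝ := fun y =>
  ∑ j ∈ Finset.range (m - s + 1), ∑ r ∈ Finset.range (min i j + 1),
    (b s i j r : ℝ) * y ^ 2 * Real.log (Real.log y) ^ (i - r)
      / (2 ^ (j + 1) * Real.log y ^ (s + j))

noncomputable def Vfun (b : ℕ → ℕ → ℕ → ℕ → ℤ) (m s i : ℕ) : ℝ → ℝ := fun y =>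
  ∑ r ∈ Finset.range (min i (m - s + 1) + 1),
    (b s i (m - s + 1) r : ℝ) * y * Real.log (Real.log y) ^ (i - r)
      / (2 ^ (m - s + 1) * Real.log y ^ (m + 1))

lemma hasDerivAt_Sfun (b : ℕ → ℕ → ℕ → ℕ → ℤ) (hb : BRec b) (m s i : ℕ) (hsm : s ≤ m)
    (x : ℝ) (hx : 2 ≤ x) :
    HasDerivAt (Sfun b m s i)
      (x * Real.log (Real.log x) ^ i / Real.log x ^ s - Vfun b m s i x) x := by
  have h0 := hb.1
  set P : ℕ → ℝ := fun j => ∑ r ∈ Finset.range (min i j + 1),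
      (b s i j r : ℝ) * x * Real.log (Real.log x) ^ (i - r)
        / (2 ^ j * Real.log x ^ (s + j)) with hP
  have hder : HasDerivAt (Sfun b m s i)
      (∑ j ∈ Finset.range (m - s + 1), ∑ r ∈ Finset.range (min i j + 1),
        (b s i j r : ℝ) / 2 ^ (j + 1) *
          (2 * x * Real.log (Real.log x) ^ (i - r) / Real.log x ^ (s + j)
            + ((i - r : ℕ) : ℝ) * x * Real.log (Real.log x) ^ (i - r - 1) / Real.log x ^ (s + j + 1)
            - ((s + j : ℕ) : ℝ) * x * Real.log (Real.log x) ^ (i - r) / Real.log x ^ (s + j + 1))) x := by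
    unfold Sfun
    apply HasDerivAt.fun_sum
    intro j _
    apply HasDerivAt.fun_sum
    intro r _
    have h := (hasDerivAt_base (i - r) (s + j) x hx).const_mul ((b s i j r : ℝ) / 2 ^ (j + 1))
    have hfun : (fun y : ℝ => (b s i j r : ℝ) * y ^ 2 * Real.log (Real.log y) ^ (i - r)
          / (2 ^ (j + 1) * Real.log y ^ (s + j)))
        = fun y : ℝ => (b s i j r : ℝ) / 2 ^ (j + 1)
            * (y ^ 2 * Real.log (Real.log y) ^ (i - r) / Real.log y ^ (s + j)) := by
      funext y; ring
    rw [hfun]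
    exact h
  have hterm : ∀ j : ℕ, (∑ r ∈ Finset.range (min i j + 1),
        (b s i j r : ℝ) / 2 ^ (j + 1) *
          (2 * x * Real.log (Real.log x) ^ (i - r) / Real.log x ^ (s + j)
            + ((i - r : ℕ) : ℝ) * x * Real.log (Real.log x) ^ (i - r - 1) / Real.log x ^ (s + j + 1)
            - ((s + j : ℕ) : ℝ) * x * Real.log (Real.log x) ^ (i - r) / Real.log x ^ (s + j + 1)))
      = P j - P (j + 1) := by
    intro j
    have e1 : (∑ r ∈ Finset.range (min i j + 1),
        (b s i j r : ℝ) / 2 ^ (j + 1) *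
          (2 * x * Real.log (Real.log x) ^ (i - r) / Real.log x ^ (s + j)
            + ((i - r : ℕ) : ℝ) * x * Real.log (Real.log x) ^ (i - r - 1) / Real.log x ^ (s + j + 1)
            - ((s + j : ℕ) : ℝ) * x * Real.log (Real.log x) ^ (i - r) / Real.log x ^ (s + j + 1)))
        = P j + (x / (2 ^ (j + 1) * Real.log x ^ (s + j + 1)))
            * ∑ r ∈ Finset.range (min i j + 1),
              (b s i j r : ℝ) * (((i - r : ℕ) : ℝ) * Real.log (Real.log x) ^ (i - (r + 1))
                - ((s : ℝ) + (j : ℝ)) * Real.log (Real.log x) ^ (i - r)) := by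
      rw [hP, Finset.mul_sum, ← Finset.sum_add_distrib]
      refine Finset.sum_congr rfl (fun r hr => ?_)
      have he : i - r - 1 = i - (r + 1) := by omega
      rw [he]
      push_cast
      ring
    rw [e1, core_id b hb s i j (Real.log (Real.log x)), mul_neg]
    have e3 : x / (2 ^ (j + 1) * Real.log x ^ (s + j + 1))
        * ∑ r ∈ Finset.range (min i (j + 1) + 1),
            (b s i (j + 1) r : ℝ) * Real.log (Real.log x) ^ (i - r) = P (j + 1) := by
      rw [hP, Finset.mul_sum]
      refine Finset.sum_congr rfl (fun r hr => ?_)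
      ring
    rw [e3]
    ring
  have hval : (∑ j ∈ Finset.range (m - s + 1), ∑ r ∈ Finset.range (min i j + 1),
        (b s i j r : ℝ) / 2 ^ (j + 1) *
          (2 * x * Real.log (Real.log x) ^ (i - r) / Real.log x ^ (s + j)
            + ((i - r : ℕ) : ℝ) * x * Real.log (Real.log x) ^ (i - r - 1) / Real.log x ^ (s + j + 1)
            - ((s + j : ℕ) : ℝ) * x * Real.log (Real.log x) ^ (i - r) / Real.log x ^ (s + j + 1)))
      = x * Real.log (Real.log x) ^ i / Real.log x ^ s - Vfun b m s i x := by
    rw [Finset.sum_congr rfl (fun j _ => hterm j), Finset.sum_range_sub' P (m - s + 1)]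
    have hP0 : P 0 = x * Real.log (Real.log x) ^ i / Real.log x ^ s := by
      rw [hP]
      simp only [Nat.min_zero, zero_add, Finset.sum_range_one, h0 s i, Nat.sub_zero,
        Nat.add_zero, pow_zero, Int.cast_one, one_mul]
    have hPend : P (m - s + 1) = Vfun b m s i x := by
      rw [hP]
      unfold Vfun
      beta_reduce
      have : s + (m - s + 1) = m + 1 := by omega
      rw [this]
    rw [hP0, hPend]
  rw [← hval]
  exact hder

lemma contOn_cmul_base (e : ℝ) (a c : ℕ) (k : ℕ) :
    ContinuousOn (fun x : ℝ => e * x * Real.log (Real.log x) ^ a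
      / (2 ^ k * Real.log x ^ c)) (Set.Ici 2) := by
  have h := (contOn_base a c).const_smul (e / 2 ^ k)
  have hfun : (fun x : ℝ => e * x * Real.log (Real.log x) ^ a / (2 ^ k * Real.log x ^ c))
      = fun x : ℝ => (e / 2 ^ k) • (x * Real.log (Real.log x) ^ a / Real.log x ^ c) := by
    funext y; simp only [smul_eq_mul]; ring
  rw [hfun]; exact h

lemma contOn_Vfun (b : ℕ → ℕ → ℕ → ℕ → ℤ) (m s i : ℕ) :
    ContinuousOn (Vfun b m s i) (Set.Ici 2) := by
  unfold Vfun
  apply continuousOn_finset_sum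
  intro r _
  exact contOn_cmul_base _ _ _ _

lemma eventually_log_pow_le (k : ℕ) : ∀ᶠ n : ℝ in atTop, Real.log n ^ k ≤ n := by
  rcases Nat.eq_zero_or_pos k with hk | hk
  · subst hk
    filter_upwards [eventually_ge_atTop (1:ℝ)] with n hn
    simpa using hn
  · have hr : (0:ℝ) < (k : ℝ)⁻¹ := by positivity
    have h1 := (isLittleO_log_rpow_atTop hr).pow hk
    have h2 := h1.bound one_pos
    filter_upwards [h2, eventually_ge_atTop (1:ℝ)] with n hb hn
    have hn0 : (0:ℝ) ≤ n := by linarith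
    have hlog0 : 0 ≤ Real.log n := Real.log_nonneg hn
    have hrw : ((fun x : ℝ => x ^ (k:ℝ)⁻¹) ^ k) n = n := by
      simp only [Pi.pow_apply]
      rw [← Real.rpow_natCast (n ^ (k:ℝ)⁻¹) k, ← Real.rpow_mul hn0]
      rw [inv_mul_cancel₀ (by positivity : (k:ℝ) ≠ 0), Real.rpow_one]
    simp only [Pi.pow_apply, Real.norm_eq_abs, one_mul] at hb
    have := hb
    rw [abs_of_nonneg (pow_nonneg hlog0 k)] at this
    calc Real.log n ^ k ≤ |(n ^ (k:ℝ)⁻¹) ^ k| := this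
      _ = (n ^ (k:ℝ)⁻¹) ^ k := abs_of_nonneg (pow_nonneg (Real.rpow_nonneg hn0 _) k)
      _ = n := by
          rw [← Real.rpow_natCast (n ^ (k:ℝ)⁻¹) k, ← Real.rpow_mul hn0]
          rw [inv_mul_cancel₀ (by positivity : (k:ℝ) ≠ 0), Real.rpow_one]


/-- For `1 ≤ s ≤ m` and `0 ≤ i ≤ s`, as `n → ∞`:
`∫_3^n x (log log x)^i / log^s x dx
  = ∑_{j=0}^{m-s} ∑_{r=0}^{min(i,j)} b_{s,i,j,r} n² (log log n)^{i-r} / (2^{j+1} log^{s+j} n)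
    + O(n² (log log n)^i / log^{m+1} n)`. -/
theorem integral_x_loglog_pow_div_log_pow (b : ℕ → ℕ → ℕ → ℕ → ℤ) (hb : BRec b)
    (m s i : ℕ) (hm : 1 ≤ m) (hs : 1 ≤ s) (hsm : s ≤ m) (hi : i ≤ s) :
    (fun n : ℝ =>
        (∫ x in (3 : ℝ)..n, x * Real.log (Real.log x) ^ i / Real.log x ^ s) -
          ∑ j ∈ Finset.range (m - s + 1), ∑ r ∈ Finset.range (min i j + 1),
            (b s i j r : ℝ) * n ^ 2 * Real.log (Real.log n) ^ (i - r) /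
              (2 ^ (j + 1) * Real.log n ^ (s + j)))
      =O[atTop] fun n : ℝ => n ^ 2 * Real.log (Real.log n) ^ i / Real.log n ^ (m + 1) := by
  show (fun n : ℝ =>
      (∫ x in (3 : ℝ)..n, x * Real.log (Real.log x) ^ i / Real.log x ^ s) - Sfun b m s i n)
    =O[atTop] fun n : ℝ => n ^ 2 * Real.log (Real.log n) ^ i / Real.log n ^ (m + 1)
  -- base point
  set x1 : ℝ := Real.exp (Real.exp 1) + Real.exp ((m : ℝ) + 1) + 3 with hx1def
  have hex1 : 0 < Real.exp (Real.exp 1) := Real.exp_pos _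
  have hex2 : 0 < Real.exp ((m : ℝ) + 1) := Real.exp_pos _
  have hx13 : (3:ℝ) ≤ x1 := by rw [hx1def]; linarith
  have hx12 : (2:ℝ) ≤ x1 := by linarith
  have hfacts : ∀ x : ℝ, x1 ≤ x →
      0 < Real.log x ∧ 1 ≤ Real.log (Real.log x) ∧ (m:ℝ) + 1 ≤ Real.log x := by
    intro x hx
    have hx0 : (0:ℝ) < x := by linarith
    have h1 : Real.exp (Real.exp 1) ≤ x := by rw [hx1def] at hx; linarith
    have h2 : Real.exp ((m:ℝ) + 1) ≤ x := by rw [hx1def] at hx; linarith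
    have hL1 : Real.exp 1 ≤ Real.log x := (Real.le_log_iff_exp_le hx0).2 h1
    have hLpos : 0 < Real.log x := lt_of_lt_of_le (Real.exp_pos 1) hL1
    refine ⟨hLpos, ?_, (Real.le_log_iff_exp_le hx0).2 h2⟩
    exact (Real.le_log_iff_exp_le hLpos).2 hL1
  -- integrability of c * x * LL^a / (2^k L^c) type functions
  have hInt : ∀ (e : ℝ) (a c k : ℕ) (p q : ℝ), 2 ≤ p → 2 ≤ q →
      IntervalIntegrable (fun x : ℝ => e * x * Real.log (Real.log x) ^ a
        / (2 ^ k * Real.log x ^ c)) MeasureTheory.volume p q := by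
    intro e a c k p q hp hq
    apply ContinuousOn.intervalIntegrable
    apply (contOn_cmul_base e a c k).mono
    intro x hx
    rcases Set.mem_uIcc.mp hx with ⟨h, _⟩ | ⟨h, _⟩ <;> simp only [Set.mem_Ici] <;> linarith
  have hIntBase : ∀ (a c : ℕ) (p q : ℝ), 2 ≤ p → 2 ≤ q →
      IntervalIntegrable (fun x : ℝ => x * Real.log (Real.log x) ^ a
        / Real.log x ^ c) MeasureTheory.volume p q := by
    intro a c p q hp hq
    apply ContinuousOn.intervalIntegrable
    apply (contOn_base a c).mono
    intro x hx
    rcases Set.mem_uIcc.mp hx with ⟨h, _⟩ | ⟨h, _⟩ <;> simp only [Set.mem_Ici] <;> linarith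
  have hIntV : ∀ (p q : ℝ), 2 ≤ p → 2 ≤ q →
      IntervalIntegrable (Vfun b m s i) MeasureTheory.volume p q := by
    intro p q hp hq
    apply ContinuousOn.intervalIntegrable
    apply (contOn_Vfun b m s i).mono
    intro x hx
    rcases Set.mem_uIcc.mp hx with ⟨h, _⟩ | ⟨h, _⟩ <;> simp only [Set.mem_Ici] <;> linarith
  -- the comparison function Fd (derivative of y ↦ (1/2) y² LL^i / L^{m+1})
  set Fd : ℝ → ℝ := fun x =>
      (2 * x * Real.log (Real.log x) ^ i / Real.log x ^ (m + 1)
        + (i : ℝ) * x * Real.log (Real.log x) ^ (i - 1) / Real.log x ^ (m + 1 + 1)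
        - ((m + 1 : ℕ) : ℝ) * x * Real.log (Real.log x) ^ i / Real.log x ^ (m + 1 + 1)) / 2
    with hFddef
  have hFdcont : ContinuousOn Fd (Set.Ici 2) := by
    have hfun : Fd = fun x : ℝ =>
        ((1:ℝ) * x * Real.log (Real.log x) ^ i / (2 ^ 0 * Real.log x ^ (m + 1))
          + ((i : ℝ)/2) * x * Real.log (Real.log x) ^ (i - 1) / (2 ^ 0 * Real.log x ^ (m + 1 + 1))
          - (((m + 1 : ℕ) : ℝ)/2) * x * Real.log (Real.log x) ^ i / (2 ^ 0 * Real.log x ^ (m + 1 + 1))) := by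
      funext y; rw [hFddef]; ring
    rw [hfun]
    exact ((contOn_cmul_base 1 i (m+1) 0).add (contOn_cmul_base _ (i-1) (m+1+1) 0)).sub
      (contOn_cmul_base _ i (m+1+1) 0)
  have hIntFd : ∀ (p q : ℝ), 2 ≤ p → 2 ≤ q →
      IntervalIntegrable Fd MeasureTheory.volume p q := by
    intro p q hp hq
    apply ContinuousOn.intervalIntegrable
    apply hFdcont.mono
    intro x hx
    rcases Set.mem_uIcc.mp hx with ⟨h, _⟩ | ⟨h, _⟩ <;> simp only [Set.mem_Ici] <;> linarith
  -- FTC for F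
  have hftcF : ∀ n : ℝ, x1 ≤ n → ∫ x in x1..n, Fd x
      = (1/2) * (n ^ 2 * Real.log (Real.log n) ^ i / Real.log n ^ (m + 1))
        - (1/2) * (x1 ^ 2 * Real.log (Real.log x1) ^ i / Real.log x1 ^ (m + 1)) := by
    intro n hn
    apply intervalIntegral.integral_eq_sub_of_hasDerivAt
    · intro x hx
      rw [Set.uIcc_of_le hn] at hx
      have hx2 : 2 ≤ x := by have := hx.1; linarith
      have h := (hasDerivAt_base i (m + 1) x hx2).const_mul (1/2 : ℝ)
      have hfun : (fun y : ℝ => (1/2 : ℝ) * (y ^ 2 * Real.log (Real.log y) ^ i / Real.log y ^ (m + 1)))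
          = fun y : ℝ => (1/2) * (y ^ 2 * Real.log (Real.log y) ^ i / Real.log y ^ (m + 1)) := rfl
      have : Fd x = (1/2 : ℝ) * (2 * x * Real.log (Real.log x) ^ i / Real.log x ^ (m + 1)
        + ((m+1 : ℕ) : ℝ) * 0 + (i : ℝ) * x * Real.log (Real.log x) ^ (i - 1) / Real.log x ^ (m + 1 + 1)
        - ((m + 1 : ℕ) : ℝ) * x * Real.log (Real.log x) ^ i / Real.log x ^ (m + 1 + 1)) := by
        rw [hFddef]; ring
      rw [this]
      refine h.congr_deriv ?_
      push_cast
      ring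
    · exact hIntFd x1 n hx12 (by linarith)
  -- pointwise: crude bound function is ≤ 2 Fd on [x1, ∞)
  have hg2F : ∀ x : ℝ, x1 ≤ x →
      x * Real.log (Real.log x) ^ i / Real.log x ^ (m + 1) ≤ 2 * Fd x := by
    intro x hx
    obtain ⟨hL, hLL, hmL⟩ := hfacts x hx
    have hx0 : (0:ℝ) < x := by linarith
    have hLL0 : (0:ℝ) ≤ Real.log (Real.log x) := by linarith
    have hLLi : (0:ℝ) ≤ Real.log (Real.log x) ^ i := pow_nonneg hLL0 i
    have key : ((m:ℝ) + 1) * x * Real.log (Real.log x) ^ i / Real.log x ^ (m + 1 + 1)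
        ≤ x * Real.log (Real.log x) ^ i / Real.log x ^ (m + 1) := by
      have hq : (0:ℝ) ≤ x * Real.log (Real.log x) ^ i / Real.log x ^ (m + 1) :=
        div_nonneg (mul_nonneg hx0.le hLLi) (pow_nonneg hL.le _)
      calc ((m:ℝ) + 1) * x * Real.log (Real.log x) ^ i / Real.log x ^ (m + 1 + 1)
          = (((m:ℝ) + 1) / Real.log x) * (x * Real.log (Real.log x) ^ i / Real.log x ^ (m + 1)) := by
            rw [pow_succ]; ring
        _ ≤ 1 * (x * Real.log (Real.log x) ^ i / Real.log x ^ (m + 1)) := by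
            apply mul_le_mul_of_nonneg_right _ hq
            exact (div_le_one hL).2 hmL
        _ = x * Real.log (Real.log x) ^ i / Real.log x ^ (m + 1) := one_mul _
    have hnn : (0:ℝ) ≤ (i : ℝ) * x * Real.log (Real.log x) ^ (i - 1) / Real.log x ^ (m + 1 + 1) := by
      apply div_nonneg _ (pow_nonneg hL.le _)
      exact mul_nonneg (mul_nonneg (Nat.cast_nonneg i) hx0.le) (pow_nonneg hLL0 _)
    have h2 : 2 * Fd x = 2 * (x * Real.log (Real.log x) ^ i / Real.log x ^ (m + 1))
        + (i:ℝ) * x * Real.log (Real.log x) ^ (i - 1) / Real.log x ^ (m + 1 + 1)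
        - ((m:ℝ) + 1) * x * Real.log (Real.log x) ^ i / Real.log x ^ (m + 1 + 1) := by
      rw [hFddef]; push_cast; ring
    rw [h2]
    linarith
  -- pointwise bound |Vfun| ≤ C * crude
  set C : ℝ := ∑ r ∈ Finset.range (min i (m - s + 1) + 1), |(b s i (m - s + 1) r : ℝ)| with hCdef
  have hC0 : 0 ≤ C := Finset.sum_nonneg (fun r _ => abs_nonneg _)
  have hVC : ∀ x : ℝ, x1 ≤ x →
      |Vfun b m s i x| ≤ C * (x * Real.log (Real.log x) ^ i / Real.log x ^ (m + 1)) := by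
    intro x hx
    obtain ⟨hL, hLL, hmL⟩ := hfacts x hx
    have hx0 : (0:ℝ) < x := by linarith
    have hLL0 : (0:ℝ) ≤ Real.log (Real.log x) := by linarith
    calc |Vfun b m s i x| ≤ ∑ r ∈ Finset.range (min i (m - s + 1) + 1),
          |(b s i (m - s + 1) r : ℝ) * x * Real.log (Real.log x) ^ (i - r)
            / (2 ^ (m - s + 1) * Real.log x ^ (m + 1))| := Finset.abs_sum_le_sum_abs _ _
      _ ≤ ∑ r ∈ Finset.range (min i (m - s + 1) + 1),
          |(b s i (m - s + 1) r : ℝ)| * (x * Real.log (Real.log x) ^ i / Real.log x ^ (m + 1)) := by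
          apply Finset.sum_le_sum
          intro r _
          have he : (b s i (m - s + 1) r : ℝ) * x * Real.log (Real.log x) ^ (i - r)
              / (2 ^ (m - s + 1) * Real.log x ^ (m + 1))
              = (b s i (m - s + 1) r : ℝ) * (x * Real.log (Real.log x) ^ (i - r)
                / (2 ^ (m - s + 1) * Real.log x ^ (m + 1))) := by ring
          rw [he, abs_mul]
          apply mul_le_mul_of_nonneg_left _ (abs_nonneg _)
          have hnn2 : (0:ℝ) ≤ x * Real.log (Real.log x) ^ (i - r)
              / (2 ^ (m - s + 1) * Real.log x ^ (m + 1)) := by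
            apply div_nonneg (mul_nonneg hx0.le (pow_nonneg hLL0 _))
            exact mul_nonneg (by positivity) (pow_nonneg hL.le _)
          rw [abs_of_nonneg hnn2]
          have h1 : x * Real.log (Real.log x) ^ (i - r) ≤ x * Real.log (Real.log x) ^ i :=
            mul_le_mul_of_nonneg_left (pow_le_pow_right₀ hLL (Nat.sub_le i r)) hx0.le
          have h2 : Real.log x ^ (m + 1) ≤ 2 ^ (m - s + 1) * Real.log x ^ (m + 1) :=
            le_mul_of_one_le_left (pow_pos hL _).le (one_le_pow₀ one_le_two)
          exact div_le_div₀ (mul_nonneg hx0.le (pow_nonneg hLL0 i)) h1 (pow_pos hL _) h2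
      _ = C * (x * Real.log (Real.log x) ^ i / Real.log x ^ (m + 1)) := by
          rw [hCdef, Finset.sum_mul]
  -- FTC for S
  have hftcS : ∀ n : ℝ, x1 ≤ n →
      ∫ x in x1..n, (x * Real.log (Real.log x) ^ i / Real.log x ^ s - Vfun b m s i x)
        = Sfun b m s i n - Sfun b m s i x1 := by
    intro n hn
    apply intervalIntegral.integral_eq_sub_of_hasDerivAt
    · intro x hx
      rw [Set.uIcc_of_le hn] at hx
      exact hasDerivAt_Sfun b hb m s i hsm x (by linarith [hx.1])
    · exact (hIntBase i s x1 n hx12 (by linarith)).sub (hIntV x1 n hx12 (by linarith))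
  -- decomposition
  set K : ℝ := (∫ x in (3:ℝ)..x1, x * Real.log (Real.log x) ^ i / Real.log x ^ s)
      - Sfun b m s i x1 with hKdef
  have hdecomp : ∀ n : ℝ, x1 ≤ n →
      (∫ x in (3:ℝ)..n, x * Real.log (Real.log x) ^ i / Real.log x ^ s) - Sfun b m s i n
        = K + ∫ x in x1..n, Vfun b m s i x := by
    intro n hn
    have hadd : (∫ x in (3:ℝ)..x1, x * Real.log (Real.log x) ^ i / Real.log x ^ s)
        + (∫ x in x1..n, x * Real.log (Real.log x) ^ i / Real.log x ^ s)
        = ∫ x in (3:ℝ)..n, x * Real.log (Real.log x) ^ i / Real.log x ^ s :=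
      intervalIntegral.integral_add_adjacent_intervals
        (hIntBase i s 3 x1 (by norm_num) hx12) (hIntBase i s x1 n hx12 (by linarith))
    have hsub : ∫ x in x1..n, (x * Real.log (Real.log x) ^ i / Real.log x ^ s - Vfun b m s i x)
        = (∫ x in x1..n, x * Real.log (Real.log x) ^ i / Real.log x ^ s)
          - ∫ x in x1..n, Vfun b m s i x :=
      intervalIntegral.integral_sub (hIntBase i s x1 n hx12 (by linarith))
        (hIntV x1 n hx12 (by linarith))
    have hS := hftcS n hn
    rw [hsub] at hS
    rw [hKdef, ← hadd]
    linarith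
  -- bound on the tail integral
  have hWbound : ∀ n : ℝ, x1 ≤ n → |∫ x in x1..n, Vfun b m s i x|
      ≤ C * (n ^ 2 * Real.log (Real.log n) ^ i / Real.log n ^ (m + 1)) := by
    intro n hn
    have habs : |∫ x in x1..n, Vfun b m s i x| ≤ ∫ x in x1..n, |Vfun b m s i x| :=
      intervalIntegral.abs_integral_le_integral_abs hn
    have hmono : (∫ x in x1..n, |Vfun b m s i x|) ≤ ∫ x in x1..n, 2 * C * Fd x := by
      apply intervalIntegral.integral_mono_on hn ((hIntV x1 n hx12 (by linarith)).abs)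
        ((hIntFd x1 n hx12 (by linarith)).const_mul (2 * C))
      intro x hxmem
      calc |Vfun b m s i x| ≤ C * (x * Real.log (Real.log x) ^ i / Real.log x ^ (m + 1)) :=
            hVC x hxmem.1
        _ ≤ C * (2 * Fd x) := mul_le_mul_of_nonneg_left (hg2F x hxmem.1) hC0
        _ = 2 * C * Fd x := by ring
    have hconst : ∫ x in x1..n, 2 * C * Fd x = 2 * C * ∫ x in x1..n, Fd x :=
      intervalIntegral.integral_const_mul _ _
    have hFx1 : 0 ≤ (1/2) * (x1 ^ 2 * Real.log (Real.log x1) ^ i / Real.log x1 ^ (m + 1)) := by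
      obtain ⟨hL, hLL, _⟩ := hfacts x1 le_rfl
      have hLL0 : (0:ℝ) ≤ Real.log (Real.log x1) := by linarith
      have : (0:ℝ) ≤ x1 ^ 2 * Real.log (Real.log x1) ^ i / Real.log x1 ^ (m + 1) :=
        div_nonneg (mul_nonneg (sq_nonneg _) (pow_nonneg hLL0 i)) (pow_nonneg hL.le _)
      linarith
    calc |∫ x in x1..n, Vfun b m s i x| ≤ ∫ x in x1..n, |Vfun b m s i x| := habs
      _ ≤ ∫ x in x1..n, 2 * C * Fd x := hmono
      _ = 2 * C * ∫ x in x1..n, Fd x := hconst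
      _ = 2 * C * ((1/2) * (n ^ 2 * Real.log (Real.log n) ^ i / Real.log n ^ (m + 1))
          - (1/2) * (x1 ^ 2 * Real.log (Real.log x1) ^ i / Real.log x1 ^ (m + 1))) := by
          rw [hftcF n hn]
      _ ≤ C * (n ^ 2 * Real.log (Real.log n) ^ i / Real.log n ^ (m + 1)) := by
          nlinarith [mul_nonneg hC0 hFx1]
  -- final assembly
  rw [Asymptotics.isBigO_iff]
  refine ⟨C + |K|, ?_⟩
  filter_upwards [eventually_ge_atTop x1, eventually_log_pow_le (m + 1),
    eventually_ge_atTop (1:ℝ)] with n hn hlog hn1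
  obtain ⟨hL, hLL, hmL⟩ := hfacts n hn
  have hLL0 : (0:ℝ) ≤ Real.log (Real.log n) := by linarith
  have hLp : (0:ℝ) < Real.log n ^ (m + 1) := pow_pos hL _
  have hR0 : (0:ℝ) ≤ n ^ 2 * Real.log (Real.log n) ^ i / Real.log n ^ (m + 1) :=
    div_nonneg (mul_nonneg (sq_nonneg _) (pow_nonneg hLL0 i)) hLp.le
  have hR1 : (1:ℝ) ≤ n ^ 2 * Real.log (Real.log n) ^ i / Real.log n ^ (m + 1) := by
    rw [one_le_div hLp]
    have hLLi : (1:ℝ) ≤ Real.log (Real.log n) ^ i := one_le_pow₀ hLL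
    nlinarith [hlog, hn1, hLLi]
  rw [Real.norm_eq_abs, Real.norm_eq_abs, hdecomp n hn,
    abs_of_nonneg hR0]
  calc |K + ∫ x in x1..n, Vfun b m s i x| ≤ |K| + |∫ x in x1..n, Vfun b m s i x| := abs_add_le _ _
    _ ≤ |K| + C * (n ^ 2 * Real.log (Real.log n) ^ i / Real.log n ^ (m + 1)) := by
        linarith [hWbound n hn]
    _ ≤ (C + |K|) * (n ^ 2 * Real.log (Real.log n) ^ i / Real.log n ^ (m + 1)) := by
        nlinarith [abs_nonneg K, hR1, hC0]
end
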